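/- For positive reals a₁ ≥ ... ≥ a_m > 0, there exists μ ∈ [1/a₁², 1/a_m²] such that ((Σ a_i)/m)·exp(−μ·Var(a)/2) = (Π a_i)^{1/m}, where Var(a) is the empirical variance. -/

import Mathlib

/-- Empirical variance of a vector. -/
noncomputable def empVar {k : ℕ} (z : Fin k → ℝ) : ℝ :=
  (∑ i, (z i - (∑ j, z j) / k) ^ 2) / k

private lemma hasDeriv_aux (y c t : ℝ) (ht : t ≠ 0) :
    HasDerivAt (fun s => Real.log s - (s - y) / y + (s - y) ^ 2 / (2 * c ^ 2))
      (1 / t - 1 / y + (t - y) / c ^ 2) t := by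
  have h1 := Real.hasDerivAt_log ht
  have h2 : HasDerivAt (fun s : ℝ => (s - y) / y) (1 / y) t := by
    simpa [one_div] using ((hasDerivAt_id t).sub_const y).div_const y
  have h3 : HasDerivAt (fun s : ℝ => (s - y) ^ 2 / (2 * c ^ 2)) ((t - y) / c ^ 2) t := by
    have h := (((hasDerivAt_id t).sub_const y).pow 2).div_const (2 * c ^ 2)
    norm_num at h
    rwa [mul_div_mul_left _ _ (two_ne_zero)] at h
  have := (h1.sub h2).add h3
  simp only [one_div] at this ⊢; exact this

private lemma log_ub {x y c : ℝ} (hx : 0 < x) (hy : 0 < y) (hxc : x ≤ c) (hyc : y ≤ c) :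
    Real.log x ≤ Real.log y + (x - y) / y - (x - y) ^ 2 / (2 * c ^ 2) := by
  set f : ℝ → ℝ := fun s => Real.log s - (s - y) / y + (s - y) ^ 2 / (2 * c ^ 2) with hf
  have hfy : f y = Real.log y := by simp [hf]
  have key : f x ≤ f y := by
    have hderiv : ∀ t : ℝ, 0 < t →
        HasDerivAt f (1 / t - 1 / y + (t - y) / c ^ 2) t := fun t ht =>
      hasDeriv_aux y c t ht.ne'
    rcases le_total x y with hxy | hxy
    · -- monotone on [x, y]
      have hmono : MonotoneOn f (Set.Icc x y) := by
        apply monotoneOn_of_deriv_nonneg (convex_Icc x y)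
        · intro t ht
          exact (hderiv t (lt_of_lt_of_le hx ht.1)).continuousAt.continuousWithinAt
        · intro t ht
          rw [interior_Icc] at ht
          exact ((hderiv t (lt_trans hx ht.1)).differentiableAt).differentiableWithinAt
        · intro t ht
          rw [interior_Icc] at ht
          have ht0 : 0 < t := lt_trans hx ht.1
          rw [(hderiv t ht0).deriv]
          have hty : t * y ≤ c ^ 2 := by nlinarith [ht.2, hyc, ht0.le, hy.le]
          have e : 1 / t - 1 / y = (y - t) / (t * y) := by
            field_simp
          have k : (y - t) / c ^ 2 ≤ (y - t) / (t * y) :=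
            div_le_div_of_nonneg_left (by linarith [ht.2]) (by positivity) hty
          rw [e]
          have : (t - y) / c ^ 2 = -((y - t) / c ^ 2) := by ring
          rw [this]
          linarith
      exact hmono (Set.left_mem_Icc.2 hxy) (Set.right_mem_Icc.2 hxy) hxy
    · -- antitone on [y, x]
      have hanti : AntitoneOn f (Set.Icc y x) := by
        apply antitoneOn_of_deriv_nonpos (convex_Icc y x)
        · intro t ht
          exact (hderiv t (lt_of_lt_of_le hy ht.1)).continuousAt.continuousWithinAt
        · intro t ht
          rw [interior_Icc] at ht
          exact ((hderiv t (lt_trans hy ht.1)).differentiableAt).differentiableWithinAt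
        · intro t ht
          rw [interior_Icc] at ht
          have ht0 : 0 < t := lt_trans hy ht.1
          rw [(hderiv t ht0).deriv]
          have hty : t * y ≤ c ^ 2 := by nlinarith [ht.2, hxc, ht0.le, hy.le]
          have e : 1 / t - 1 / y = (y - t) / (t * y) := by
            field_simp
          have k : (t - y) / c ^ 2 ≤ (t - y) / (t * y) :=
            div_le_div_of_nonneg_left (by linarith [ht.1]) (by positivity) hty
          rw [e]
          have : (y - t) / (t * y) = -((t - y) / (t * y)) := by ring
          rw [this]
          linarith
      exact hanti (Set.left_mem_Icc.2 hxy) (Set.right_mem_Icc.2 hxy) hxy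
  rw [hfy] at key
  have h2 := add_le_add_right key ((x - y) / y - (x - y) ^ 2 / (2 * c ^ 2))
  calc Real.log x = f x + ((x - y) / y - (x - y) ^ 2 / (2 * c ^ 2)) := by
        simp only [hf]; ring
    _ ≤ Real.log y + ((x - y) / y - (x - y) ^ 2 / (2 * c ^ 2)) := by linarith
    _ = Real.log y + (x - y) / y - (x - y) ^ 2 / (2 * c ^ 2) := by ring

private lemma log_lb {x y d : ℝ} (hd : 0 < d) (hdx : d ≤ x) (hdy : d ≤ y) :
    Real.log y + (x - y) / y - (x - y) ^ 2 / (2 * d ^ 2) ≤ Real.log x := by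
  set f : ℝ → ℝ := fun s => Real.log s - (s - y) / y + (s - y) ^ 2 / (2 * d ^ 2) with hf
  have hy : 0 < y := lt_of_lt_of_le hd hdy
  have hx : 0 < x := lt_of_lt_of_le hd hdx
  have hfy : f y = Real.log y := by simp [hf]
  have key : f y ≤ f x := by
    have hderiv : ∀ t : ℝ, 0 < t →
        HasDerivAt f (1 / t - 1 / y + (t - y) / d ^ 2) t := fun t ht =>
      hasDeriv_aux y d t ht.ne'
    rcases le_total x y with hxy | hxy
    · -- antitone on [x, y]
      have hanti : AntitoneOn f (Set.Icc x y) := by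
        apply antitoneOn_of_deriv_nonpos (convex_Icc x y)
        · intro t ht
          exact (hderiv t (lt_of_lt_of_le hx ht.1)).continuousAt.continuousWithinAt
        · intro t ht
          rw [interior_Icc] at ht
          exact ((hderiv t (lt_trans hx ht.1)).differentiableAt).differentiableWithinAt
        · intro t ht
          rw [interior_Icc] at ht
          have ht0 : 0 < t := lt_trans hx ht.1
          rw [(hderiv t ht0).deriv]
          have hty : d ^ 2 ≤ t * y := by nlinarith [ht.1, hdx, hdy, hd.le]
          have e : 1 / t - 1 / y = (y - t) / (t * y) := by
            field_simp
          have k : (y - t) / (t * y) ≤ (y - t) / d ^ 2 :=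
            div_le_div_of_nonneg_left (by linarith [ht.2]) (by positivity) hty
          rw [e]
          have : (t - y) / d ^ 2 = -((y - t) / d ^ 2) := by ring
          rw [this]
          linarith
      exact hanti (Set.left_mem_Icc.2 hxy) (Set.right_mem_Icc.2 hxy) hxy
    · -- monotone on [y, x]
      have hmono : MonotoneOn f (Set.Icc y x) := by
        apply monotoneOn_of_deriv_nonneg (convex_Icc y x)
        · intro t ht
          exact (hderiv t (lt_of_lt_of_le hy ht.1)).continuousAt.continuousWithinAt
        · intro t ht
          rw [interior_Icc] at ht
          exact ((hderiv t (lt_trans hy ht.1)).differentiableAt).differentiableWithinAt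
        · intro t ht
          rw [interior_Icc] at ht
          have ht0 : 0 < t := lt_trans hy ht.1
          rw [(hderiv t ht0).deriv]
          have hty : d ^ 2 ≤ t * y := by nlinarith [ht.1, hdy, hd.le]
          have e : 1 / t - 1 / y = (y - t) / (t * y) := by
            field_simp
          have k : (t - y) / (t * y) ≤ (t - y) / d ^ 2 :=
            div_le_div_of_nonneg_left (by linarith [ht.1]) (by positivity) hty
          rw [e]
          have : (y - t) / (t * y) = -((t - y) / (t * y)) := by ring
          rw [this]
          linarith
      exact hmono (Set.left_mem_Icc.2 hxy) (Set.right_mem_Icc.2 hxy) hxy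
  rw [hfy] at key
  have h2 := add_le_add_right key ((x - y) / y - (x - y) ^ 2 / (2 * d ^ 2))
  calc Real.log y + (x - y) / y - (x - y) ^ 2 / (2 * d ^ 2)
      = Real.log y + ((x - y) / y - (x - y) ^ 2 / (2 * d ^ 2)) := by ring
    _ ≤ f x + ((x - y) / y - (x - y) ^ 2 / (2 * d ^ 2)) := by linarith
    _ = Real.log x := by simp only [hf]; ring

private lemma main_aux {m : ℕ} (hm : 0 < m) (a : Fin m → ℝ) (hpos : ∀ i, 0 < a i)
    (lo hi : ℝ) (hlopos : 0 < lo)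
    (hle : ∀ i, a i ≤ hi) (hge : ∀ i, lo ≤ a i) :
    ∃ μ ∈ Set.Icc (1 / hi ^ 2) (1 / lo ^ 2),
      ((∑ i, a i) / m) * Real.exp (-μ * empVar a / 2) = (∏ i, a i) ^ ((1 : ℝ) / m) := by
  haveI : Nonempty (Fin m) := ⟨⟨0, hm⟩⟩
  have hm' : (0:ℝ) < m := by exact_mod_cast hm
  have hhipos : 0 < hi := lt_of_lt_of_le (hpos ⟨0, hm⟩) (hle _)
  have hlohi : lo ≤ hi := le_trans (hge ⟨0, hm⟩) (hle _)
  set A := (∑ i, a i) / (m:ℝ) with hA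
  have hsumpos : 0 < ∑ i, a i := Finset.sum_pos (fun i _ => hpos i) Finset.univ_nonempty
  have hApos : 0 < A := div_pos hsumpos hm'
  have hAle : A ≤ hi := by
    rw [hA, div_le_iff₀ hm']
    calc ∑ i, a i ≤ ∑ _i : Fin m, hi := Finset.sum_le_sum fun i _ => hle i
      _ = hi * m := by simp [Finset.sum_const, Finset.card_univ, mul_comm]
  have hAge : lo ≤ A := by
    rw [hA, le_div_iff₀ hm']
    calc lo * m = ∑ _i : Fin m, lo := by simp [Finset.sum_const, Finset.card_univ, mul_comm]
      _ ≤ ∑ i, a i := Finset.sum_le_sum fun i _ => hge i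
  set S := ∑ i, (a i - A) ^ 2 with hS
  have hSnn : 0 ≤ S := Finset.sum_nonneg fun i _ => sq_nonneg _
  have hV : empVar a = S / m := rfl
  have hVnn : 0 ≤ empVar a := by rw [hV]; exact div_nonneg hSnn hm'.le
  have hsum0 : ∑ i, (a i - A) = 0 := by
    rw [Finset.sum_sub_distrib, Finset.sum_const, Finset.card_univ, Fintype.card_fin,
      nsmul_eq_mul, hA]
    field_simp
    ring
  have hmV : (m:ℝ) * empVar a = S := by rw [hV]; field_simp
  set LG := ∑ i, Real.log (a i) with hLG
  have hsumeq : ∀ c : ℝ,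
      ∑ i, (Real.log A + (a i - A) / A - (a i - A) ^ 2 / (2 * c ^ 2))
        = m * Real.log A - S / (2 * c ^ 2) := by
    intro c
    rw [Finset.sum_sub_distrib, Finset.sum_add_distrib, Finset.sum_const,
      Finset.card_univ, Fintype.card_fin, nsmul_eq_mul, ← Finset.sum_div,
      ← Finset.sum_div, hsum0, hS]
    ring
  have h1 : LG ≤ m * Real.log A - S / (2 * hi ^ 2) := by
    have h := Finset.sum_le_sum
      (fun i (_ : i ∈ Finset.univ) => log_ub (hpos i) hApos (hle i) hAle)
    rw [← hsumeq hi]; exact h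
  have h2 : m * Real.log A - S / (2 * lo ^ 2) ≤ LG := by
    have h := Finset.sum_le_sum
      (fun i (_ : i ∈ Finset.univ) => log_lb hlopos (hge i) hAge)
    rw [← hsumeq lo]; exact h
  have hprodpos : 0 < ∏ i, a i := Finset.prod_pos fun i _ => hpos i
  set G := (∏ i, a i) ^ ((1:ℝ)/m) with hG
  have hGpos : 0 < G := Real.rpow_pos_of_pos hprodpos _
  have hlogG : Real.log G = LG / m := by
    rw [hG, Real.log_rpow hprodpos, Real.log_prod (fun i _ => (hpos i).ne'), hLG]
    ring
  set L := Real.log A - Real.log G with hL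
  have hml : (m:ℝ) * L = m * Real.log A - LG := by
    rw [hL, hlogG]; field_simp
  have hL1 : S / (2 * hi ^ 2) ≤ m * L := by rw [hml]; linarith
  have hL2 : m * L ≤ S / (2 * lo ^ 2) := by rw [hml]; linarith
  clear_value A S LG G L
  rcases eq_or_lt_of_le hVnn with hV0 | hVpos
  · -- zero variance
    have hS0 : S = 0 := by rw [← hmV, ← hV0]; ring
    have hL0 : L = 0 := by
      have e1 : (0:ℝ) ≤ m * L := le_trans (div_nonneg hSnn (by positivity)) hL1
      have e2 : m * L ≤ 0 := by rw [hS0] at hL2; simpa using hL2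
      nlinarith
    refine ⟨1 / hi ^ 2, ⟨le_refl _, ?_⟩, ?_⟩
    · apply div_le_div_of_nonneg_left zero_le_one (by positivity)
      nlinarith
    · rw [← hV0]
      have hAG : A = G := by
        have : Real.log A = Real.log G := by rw [hL] at hL0; linarith
        calc A = Real.exp (Real.log A) := (Real.exp_log hApos).symm
          _ = Real.exp (Real.log G) := by rw [this]
          _ = G := Real.exp_log hGpos
      simp [hAG]
  · -- positive variance
    have hLnn : S / (2 * hi ^ 2) ≤ m * L := hL1
    have hdiv1 : empVar a / (2 * hi ^ 2) ≤ L := by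
      have e : S / (2 * hi ^ 2) = m * (empVar a / (2 * hi ^ 2)) := by
        rw [← hmV]; ring
      rw [e] at hL1
      exact le_of_mul_le_mul_left hL1 hm'
    have hdiv2 : L ≤ empVar a / (2 * lo ^ 2) := by
      have e : S / (2 * lo ^ 2) = m * (empVar a / (2 * lo ^ 2)) := by
        rw [← hmV]; ring
      rw [e] at hL2
      exact le_of_mul_le_mul_left hL2 hm'
    refine ⟨2 * L / empVar a, ⟨?_, ?_⟩, ?_⟩
    · rw [le_div_iff₀ hVpos]
      have e : 1 / hi ^ 2 * empVar a = 2 * (empVar a / (2 * hi ^ 2)) := by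
        field_simp
      rw [e]; linarith
    · rw [div_le_iff₀ hVpos]
      have e : 1 / lo ^ 2 * empVar a = 2 * (empVar a / (2 * lo ^ 2)) := by
        field_simp
      rw [e]; linarith
    · have e : -(2 * L / empVar a) * empVar a / 2 = -L := by
        field_simp
      rw [e]
      have hexp : Real.exp (-L) = G / A := by
        rw [hL, neg_sub, Real.exp_sub, Real.exp_log hApos, Real.exp_log hGpos]
      rw [hexp, mul_div_cancel₀ _ hApos.ne']

/-- Hölder's defect formula in exact form: for positive reals
a₁ ≥ ... ≥ a_m > 0 there exists μ ∈ [1/a₁², 1/a_m²] with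
((Σ aᵢ)/m)·exp(−μ·Var(a)/2) = (Π aᵢ)^{1/m}. -/
theorem stmt13 {m : ℕ} (hm : 0 < m) (a : Fin m → ℝ) (hpos : ∀ i, 0 < a i)
    (hsorted : Antitone a) :
    ∃ μ ∈ Set.Icc (1 / a ⟨0, hm⟩ ^ 2) (1 / a ⟨m - 1, by omega⟩ ^ 2),
      ((∑ i, a i) / m) * Real.exp (-μ * empVar a / 2) = (∏ i, a i) ^ ((1 : ℝ) / m) := by
  have hle : ∀ i, a i ≤ a ⟨0, hm⟩ := fun i => hsorted (by simp [Fin.le_def])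
  have hge : ∀ i, a ⟨m - 1, by omega⟩ ≤ a i := by
    intro i
    apply hsorted
    rw [Fin.le_def]
    have := i.isLt
    simp only []
    omega
  exact main_aux hm a hpos _ _ (hpos _) hle hge
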